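/- Let 0 < α < 1, c₁, c₂ > 0, t > 0 and x ∈ [0,1]. With G_t(x) = (1+tx)^{-1} and A_α the generator defined via Beta(1−α,1+α) resampling and Beta(1−α,α) mutation terms, one has A_α G_t(x) = t · ((1+t)^α − 1)/α · x(1-x)/(1+tx)^{2+α} − t/(α+1) · [c₁(1-x)(1+t)^{α-1} − c₂ x]/(1+tx)^{1+α}. -/

import Mathlib

set_option maxHeartbeats 1000000

open MeasureTheory

/-- Beta(a,b) density on [0,1]. -/
noncomputable def betaDensity (a b u : ℝ) : ℝ :=
  Real.Gamma (a + b) / (Real.Gamma a * Real.Gamma b) * u ^ (a - 1) * (1 - u) ^ (b - 1)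

/-- Generator of the one-dimensional generalized Fleming–Viot process. -/
noncomputable def genA (α c₁ c₂ : ℝ) (G : ℝ → ℝ) (x : ℝ) : ℝ :=
  (∫ u in Set.Icc (0:ℝ) 1, betaDensity (1 - α) (1 + α) u / u ^ 2
      * (x * G ((1 - u) * x + u) + (1 - x) * G ((1 - u) * x) - G x))
  + ∫ u in Set.Icc (0:ℝ) 1, betaDensity (1 - α) α u / ((α + 1) * u)
      * (c₁ * G ((1 - u) * x + u) + c₂ * G ((1 - u) * x) - (c₁ + c₂) * G x)

lemma realBeta_integrable {a b : ℝ} (ha : 0 < a) (hb : 0 < b) :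
    IntegrableOn (fun u : ℝ => u ^ (a-1) * (1-u) ^ (b-1)) (Set.Ioo (0:ℝ) 1) := by
  have hc : IntervalIntegrable (fun x : ℝ => (x:ℂ) ^ ((a:ℂ)-1) * ((1:ℂ)-x) ^ ((b:ℂ)-1))
      volume 0 1 := Complex.betaIntegral_convergent (by simpa using ha) (by simpa using hb)
  have hc' : IntegrableOn (fun x : ℝ => (x:ℂ) ^ ((a:ℂ)-1) * ((1:ℂ)-x) ^ ((b:ℂ)-1))
      (Set.Ioc (0:ℝ) 1) := by
    simpa [intervalIntegrable_iff, Set.uIoc_of_le (zero_le_one' ℝ)] using hc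
  have heq : Set.EqOn (fun x : ℝ => (x:ℂ) ^ ((a:ℂ)-1) * ((1:ℂ)-x) ^ ((b:ℂ)-1))
      (fun u : ℝ => ((u ^ (a-1) * (1-u) ^ (b-1) : ℝ) : ℂ)) (Set.Ioo (0:ℝ) 1) := by
    intro u hu
    simp only [Complex.ofReal_mul]
    rw [Complex.ofReal_cpow hu.1.le, Complex.ofReal_cpow (by linarith [hu.2] : (0:ℝ) ≤ 1 - u)]
    push_cast
    ring
  have : IntegrableOn (fun u : ℝ => ((u ^ (a-1) * (1-u) ^ (b-1) : ℝ) : ℂ))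
      (Set.Ioo (0:ℝ) 1) := by
    exact ((hc'.mono Set.Ioo_subset_Ioc_self le_rfl).congr_fun heq measurableSet_Ioo)
  simpa [IntegrableOn] using this.re

lemma ofReal_setIntegral {s : Set ℝ} (f : ℝ → ℝ) :
    (∫ u in s, ((f u : ℝ) : ℂ)) = ((∫ u in s, f u : ℝ) : ℂ) :=
  integral_ofReal

lemma realBeta {a b : ℝ} (ha : 0 < a) (hb : 0 < b) :
    ∫ u in Set.Ioo (0:ℝ) 1, u ^ (a-1) * (1-u) ^ (b-1)
      = Real.Gamma a * Real.Gamma b / Real.Gamma (a+b) := by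
  have h := Complex.Gamma_mul_Gamma_eq_betaIntegral (s := a) (t := b)
    (by simpa using ha) (by simpa using hb)
  have hIoc : Complex.betaIntegral a b
      = ∫ u in Set.Ioc (0:ℝ) 1, ((u:ℂ) ^ ((a:ℂ)-1) * ((1:ℂ)-u) ^ ((b:ℂ)-1)) := by
    rw [Complex.betaIntegral, intervalIntegral.integral_of_le zero_le_one]
  have hIoo : Complex.betaIntegral a b
      = ∫ u in Set.Ioo (0:ℝ) 1, ((u:ℂ) ^ ((a:ℂ)-1) * ((1:ℂ)-u) ^ ((b:ℂ)-1)) := by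
    rw [hIoc, integral_Ioc_eq_integral_Ioo]
  have heq : Set.EqOn (fun x : ℝ => (x:ℂ) ^ ((a:ℂ)-1) * ((1:ℂ)-x) ^ ((b:ℂ)-1))
      (fun u : ℝ => ((u ^ (a-1) * (1-u) ^ (b-1) : ℝ) : ℂ)) (Set.Ioo (0:ℝ) 1) := by
    intro u hu
    simp only [Complex.ofReal_mul]
    rw [Complex.ofReal_cpow hu.1.le, Complex.ofReal_cpow (by linarith [hu.2] : (0:ℝ) ≤ 1 - u)]
    push_cast
    ring
  rw [setIntegral_congr_fun measurableSet_Ioo heq] at hIoo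
  rw [ofReal_setIntegral] at hIoo
  have hG : Real.Gamma (a+b) ≠ 0 := (Real.Gamma_pos_of_pos (by linarith)).ne'
  have h2 : (Real.Gamma a * Real.Gamma b : ℂ)
      = (Real.Gamma (a+b) : ℂ) * ((∫ u in Set.Ioo (0:ℝ) 1, u ^ (a-1) * (1-u) ^ (b-1) : ℝ) : ℂ) := by
    rw [← hIoo, ← Complex.Gamma_ofReal, ← Complex.Gamma_ofReal, ← Complex.Gamma_ofReal]
    push_cast
    exact h
  have h3 := congrArg Complex.re h2
  simp only [← Complex.ofReal_mul, Complex.ofReal_re] at h3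
  field_simp
  linarith [h3]

lemma one_add_mul_pos {s u : ℝ} (hs : -1 < s) (hu : u ∈ Set.Ioo (0:ℝ) 1) : 0 < 1 + s * u := by
  rcases le_or_gt 0 s with h | h
  · nlinarith [hu.1, hu.2]
  · nlinarith [hu.1, hu.2]

lemma kernel_integrable {a b s : ℝ} (ha : 0 < a) (hb : 0 < b) (hs : -1 < s) :
    IntegrableOn (fun u : ℝ => u ^ (a-1) * (1-u) ^ (b-1) / (1 + s*u)) (Set.Ioo (0:ℝ) 1) := by
  have hm : 0 < min 1 (1+s) := lt_min one_pos (by linarith)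
  have hmeas : AEStronglyMeasurable (fun u : ℝ => u ^ (a-1) * (1-u) ^ (b-1) / (1 + s*u))
      (volume.restrict (Set.Ioo (0:ℝ) 1)) := by
    apply Measurable.aestronglyMeasurable
    fun_prop
  refine Integrable.mono' (((realBeta_integrable ha hb).const_mul (min 1 (1+s))⁻¹)) hmeas ?_
  filter_upwards [ae_restrict_mem measurableSet_Ioo] with u hu
  have hc : 0 < 1 + s * u := one_add_mul_pos hs hu
  have hmc : min 1 (1+s) ≤ 1 + s * u := by
    rcases le_or_gt 0 s with h | h
    · exact le_trans (min_le_left _ _) (by nlinarith [hu.1])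
    · exact le_trans (min_le_right _ _) (by nlinarith [hu.2])
  have hu0 : 0 < u := hu.1
  have h1u : 0 < 1 - u := by linarith [hu.2]
  have hnn : 0 ≤ u ^ (a-1) * (1-u) ^ (b-1) := by positivity
  rw [Real.norm_eq_abs, abs_of_nonneg (div_nonneg hnn hc.le), div_eq_mul_inv, mul_comm]
  exact mul_le_mul_of_nonneg_right (inv_anti₀ hm hmc) hnn

lemma J_val {α s : ℝ} (hα : 0 < α) (hα1 : α < 1) (hs : -1 < s) :
    ∫ u in Set.Ioo (0:ℝ) 1, u ^ (-α) * (1-u) ^ (α-1) / (1 + s*u)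
      = (1+s) ^ (α-1) * (Real.Gamma (1-α) * Real.Gamma α) := by
  have hs1 : 0 < 1 + s := by linarith
  set φ : ℝ → ℝ := fun u => (1+s)*u/(1+s*u) with hφ
  set φ' : ℝ → ℝ := fun u => (1+s)/((1+s*u)*(1+s*u)) with hφ'
  have hderiv : ∀ u ∈ Set.Ioo (0:ℝ) 1, HasDerivWithinAt φ (φ' u) (Set.Ioo (0:ℝ) 1) u := by
    intro u hu
    have hc : 0 < 1 + s * u := one_add_mul_pos hs hu
    have h1 : HasDerivAt (fun u : ℝ => (1+s)*u) (1+s) u := by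
      simpa using (hasDerivAt_id u).const_mul (1+s)
    have h2 : HasDerivAt (fun u : ℝ => 1+s*u) s u := by
      simpa using ((hasDerivAt_id u).const_mul s).const_add 1
    have := (h1.div h2 hc.ne').hasDerivWithinAt (s := Set.Ioo (0:ℝ) 1)
    refine this.congr_deriv ?_
    rw [hφ']
    field_simp
    ring
  have hinj : Set.InjOn φ (Set.Ioo (0:ℝ) 1) := by
    intro u1 h1 u2 h2 heq
    have hc1 : 0 < 1 + s * u1 := one_add_mul_pos hs h1
    have hc2 : 0 < 1 + s * u2 := one_add_mul_pos hs h2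
    rw [hφ] at heq
    simp only [div_eq_div_iff hc1.ne' hc2.ne'] at heq
    have : (1+s) * (u1 - u2) = 0 := by linear_combination heq
    have := mul_eq_zero.mp this
    rcases this with h | h
    · linarith
    · linarith
  have himg : φ '' Set.Ioo (0:ℝ) 1 = Set.Ioo (0:ℝ) 1 := by
    ext v
    constructor
    · rintro ⟨u, hu, rfl⟩
      have hc : 0 < 1 + s * u := one_add_mul_pos hs hu
      constructor
      · have : 0 < (1+s)*u := by nlinarith [hu.1]
        positivity
      · rw [hφ, div_lt_one hc]
        nlinarith [hu.2]
    · intro hv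
      have hd : 0 < 1 + s - s*v := by
        rcases le_or_gt 0 s with h | h
        · nlinarith [hv.1, hv.2]
        · nlinarith [hv.1, hv.2]
      refine ⟨v / (1+s-s*v), ⟨div_pos hv.1 hd, ?_⟩, ?_⟩
      · rw [div_lt_one hd]; nlinarith [hv.2]
      · show (1+s) * (v/(1+s-s*v)) / (1 + s*(v/(1+s-s*v))) = v
        have h1 : 1 + s * (v/(1+s-s*v)) = (1+s)/(1+s-s*v) := by field_simp; ring
        rw [h1]
        field_simp
  have key := integral_image_eq_integral_abs_deriv_smul measurableSet_Ioo hderiv hinj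
      (fun v => v ^ (-α) * (1-v) ^ (α-1))
  rw [himg] at key
  have hBval : ∫ v in Set.Ioo (0:ℝ) 1, v ^ (-α) * (1-v) ^ (α-1)
      = Real.Gamma (1-α) * Real.Gamma α := by
    have := realBeta (a := 1-α) (b := α) (by linarith) hα
    have he : (1:ℝ) - α - 1 = -α := by ring
    rw [he] at this
    rw [this]
    norm_num [Real.Gamma_one]
  have hptws : Set.EqOn (fun u => |φ' u| • ((φ u) ^ (-α) * (1 - φ u) ^ (α-1)))
      (fun u => (1+s) ^ ((1:ℝ)-α) * (u ^ (-α) * (1-u) ^ (α-1) / (1 + s*u)))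
      (Set.Ioo (0:ℝ) 1) := by
    intro u hu
    have hc : 0 < 1 + s * u := one_add_mul_pos hs hu
    have hu0 := hu.1
    have h1u : 0 < 1 - u := by linarith [hu.2]
    have h1 : 1 - φ u = (1-u)/(1+s*u) := by
      show 1 - (1+s)*u/(1+s*u) = (1-u)/(1+s*u)
      field_simp
      ring
    simp only [smul_eq_mul]
    rw [h1, hφ, hφ']
    rw [abs_of_pos (by positivity)]
    rw [Real.div_rpow (by positivity) hc.le, Real.div_rpow h1u.le hc.le,
        Real.mul_rpow hs1.le hu0.le]
    rw [Real.rpow_neg hc.le, Real.rpow_neg hs1.le, Real.rpow_neg hu0.le,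
        Real.rpow_sub hc, Real.rpow_sub hs1, Real.rpow_sub h1u, Real.rpow_one]
    have hca : 0 < (1+s*u) ^ α := Real.rpow_pos_of_pos hc α
    have hsa : 0 < (1+s) ^ α := Real.rpow_pos_of_pos hs1 α
    have hua : 0 < u ^ α := Real.rpow_pos_of_pos hu0 α
    have h1ua : 0 < (1-u) ^ α := Real.rpow_pos_of_pos h1u α
    field_simp
    simp only [Real.rpow_one]
    ring
  rw [setIntegral_congr_fun measurableSet_Ioo hptws, integral_const_mul, hBval] at key
  have h2 : (1+s) ^ (α-1) * ((1+s) ^ ((1:ℝ)-α)) = 1 := by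
    rw [← Real.rpow_add hs1]; norm_num
  calc ∫ u in Set.Ioo (0:ℝ) 1, u ^ (-α) * (1-u) ^ (α-1) / (1 + s*u)
      = (1+s) ^ (α-1) * ((1+s) ^ ((1:ℝ)-α)
          * ∫ u in Set.Ioo (0:ℝ) 1, u ^ (-α) * (1-u) ^ (α-1) / (1 + s*u)) := by
        rw [← mul_assoc, h2, one_mul]
    _ = (1+s) ^ (α-1) * (Real.Gamma (1-α) * Real.Gamma α) := by rw [← key]

section
variable {α s : ℝ}

lemma intJ (hα : 0 < α) (hα1 : α < 1) (hs : -1 < s) :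
    IntegrableOn (fun u : ℝ => u ^ (-α) * (1-u) ^ (α-1) / (1 + s*u)) (Set.Ioo (0:ℝ) 1) := by
  have := kernel_integrable (a := 1-α) (b := α) (by linarith) hα hs
  have he : (1:ℝ) - α - 1 = -α := by ring
  rwa [he] at this

lemma intK (hα : 0 < α) (hα1 : α < 1) (hs : -1 < s) :
    IntegrableOn (fun u : ℝ => u ^ (-α) * (1-u) ^ α / (1 + s*u)) (Set.Ioo (0:ℝ) 1) := by
  have := kernel_integrable (a := 1-α) (b := 1+α) (by linarith) (by linarith) hs
  have he : (1:ℝ) - α - 1 = -α := by ring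
  have he2 : (1:ℝ) + α - 1 = α := by ring
  rwa [he, he2] at this

lemma intB (hα : 0 < α) (hα1 : α < 1) : IntegrableOn (fun u : ℝ => u ^ (-α) * (1-u) ^ (α-1)) (Set.Ioo (0:ℝ) 1) := by
  have := realBeta_integrable (a := 1-α) (b := α) (by linarith) hα
  have he : (1:ℝ) - α - 1 = -α := by ring
  rwa [he] at this

lemma B_val (hα : 0 < α) (hα1 : α < 1) : ∫ u in Set.Ioo (0:ℝ) 1, u ^ (-α) * (1-u) ^ (α-1)
    = Real.Gamma (1-α) * Real.Gamma α := by
  have := realBeta (a := 1-α) (b := α) (by linarith) hα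
  have he : (1:ℝ) - α - 1 = -α := by ring
  rw [he] at this
  rw [this]
  norm_num [Real.Gamma_one]

lemma K_val (hα : 0 < α) (hα1 : α < 1) (hs : -1 < s) (hs0 : s ≠ 0) :
    ∫ u in Set.Ioo (0:ℝ) 1, u ^ (-α) * (1-u) ^ α / (1 + s*u)
      = ((1+s) ^ α - 1) / s * (Real.Gamma (1-α) * Real.Gamma α) := by
  have hs1 : 0 < 1 + s := by linarith
  have hpt : Set.EqOn (fun u : ℝ => u ^ (-α) * (1-u) ^ α / (1 + s*u))
      (fun u : ℝ => ((1+s)/s) * (u ^ (-α) * (1-u) ^ (α-1) / (1 + s*u))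
        - (1/s) * (u ^ (-α) * (1-u) ^ (α-1))) (Set.Ioo (0:ℝ) 1) := by
    intro u hu
    have hc : 0 < 1 + s * u := one_add_mul_pos hs hu
    have h1u : 0 < 1 - u := by linarith [hu.2]
    have hpow : (1-u) ^ α = (1-u) ^ (α-1) * (1-u) := by
      rw [← Real.rpow_add_one h1u.ne' (α-1)]
      norm_num
    simp only
    rw [hpow]
    have hc' : 1 + u * s ≠ 0 := (by linarith : 0 < 1 + u * s).ne'
    field_simp
    ring
  rw [setIntegral_congr_fun measurableSet_Ioo hpt]
  rw [integral_sub (((intJ hα hα1 hs).const_mul _)) ((intB hα hα1).const_mul _),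
      integral_const_mul, integral_const_mul, J_val hα hα1 hs, B_val hα hα1]
  have h2 : (1+s) * (1+s) ^ (α-1) = (1+s) ^ α := by
    rw [Real.rpow_sub hs1, Real.rpow_one]
    field_simp
  field_simp
  linear_combination Real.Gamma (1-α) * h2
end

theorem stmt5 (α c₁ c₂ t x : ℝ) (hα : 0 < α) (hα1 : α < 1) (hc₁ : 0 < c₁) (hc₂ : 0 < c₂)
    (ht : 0 < t) (hx : x ∈ Set.Icc (0:ℝ) 1) :
    genA α c₁ c₂ (fun y => (1 + t * y)⁻¹) x
      = t * (((1 + t) ^ α - 1) / α) * (x * (1 - x) / (1 + t * x) ^ (2 + α))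
        - t / (α + 1) * ((c₁ * (1 - x) * (1 + t) ^ (α - 1) - c₂ * x) / (1 + t * x) ^ (1 + α)) := by
  obtain ⟨hx0, hx1⟩ := hx
  have ha : 0 < 1 + t * x := by nlinarith
  have ht1 : 0 < 1 + t := by linarith
  have hα1' : 0 < 1 - α := by linarith
  have hB1 : 0 < Real.Gamma (1-α) := Real.Gamma_pos_of_pos hα1'
  have hB2 : 0 < Real.Gamma α := Real.Gamma_pos_of_pos hα
  have hs1 : -1 < -(t*x)/(1+t*x) := by
    have h : t*x/(1+t*x) < 1 := (div_lt_one ha).mpr (by linarith)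
    rw [neg_div]
    linarith
  have hs2 : -1 < t*(1-x)/(1+t*x) := by
    have h : 0 ≤ t*(1-x)/(1+t*x) := div_nonneg (by nlinarith) ha.le
    linarith
  have hG2 : Real.Gamma (1-α+(1+α)) = 1 := by
    rw [show (1:ℝ)-α+(1+α) = 1+1 by ring, Real.Gamma_add_one one_ne_zero, Real.Gamma_one,
      mul_one]
  have hG1a : Real.Gamma (1+α) = α * Real.Gamma α := by
    rw [add_comm, Real.Gamma_add_one hα.ne']
  have hG1 : Real.Gamma (1-α+α) = 1 := by
    rw [show (1:ℝ)-α+α = 1 by ring, Real.Gamma_one]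
  have hAp : 0 < (1+t*x) ^ α := Real.rpow_pos_of_pos ha α
  have hTp : 0 < (1+t) ^ α := Real.rpow_pos_of_pos ht1 α
  have e1 : 1 + -(t*x)/(1+t*x) = (1+t*x)⁻¹ := by field_simp; ring
  have e2 : 1 + t*(1-x)/(1+t*x) = (1+t)/(1+t*x) := by field_simp; ring
  have h1 : (∫ u in Set.Ioo (0:ℝ) 1, betaDensity (1 - α) (1 + α) u / u ^ 2
        * (x * (1 + t * ((1 - u) * x + u))⁻¹ + (1 - x) * (1 + t * ((1 - u) * x))⁻¹
          - (1 + t * x)⁻¹))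
      = t * (((1 + t) ^ α - 1) / α) * (x * (1 - x) / (1 + t * x) ^ (2 + α)) := by
    have hpt : Set.EqOn (fun u : ℝ => betaDensity (1 - α) (1 + α) u / u ^ 2
          * (x * (1 + t * ((1 - u) * x + u))⁻¹ + (1 - x) * (1 + t * ((1 - u) * x))⁻¹
            - (1 + t * x)⁻¹))
        (fun u : ℝ => (Real.Gamma (1-α+(1+α)) / (Real.Gamma (1-α) * Real.Gamma (1+α))
              * (t^2*x^2*(1-x)/(1+t*x)^3))
            * (u ^ (-α) * (1-u) ^ α / (1 + (-(t*x)/(1+t*x))*u))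
          + (Real.Gamma (1-α+(1+α)) / (Real.Gamma (1-α) * Real.Gamma (1+α))
              * (t^2*x*(1-x)^2/(1+t*x)^3))
            * (u ^ (-α) * (1-u) ^ α / (1 + (t*(1-x)/(1+t*x))*u))) (Set.Ioo (0:ℝ) 1) := by
      intro u hu
      obtain ⟨hu0, hu1⟩ := hu
      have hA : 0 < 1 + t * ((1-u)*x + u) := by nlinarith
      have hB : 0 < 1 + t * ((1-u)*x) := by nlinarith
      have hd1 : 0 < 1 + (-(t*x)/(1+t*x))*u := one_add_mul_pos hs1 ⟨hu0, hu1⟩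
      have hd2 : 0 < 1 + (t*(1-x)/(1+t*x))*u := one_add_mul_pos hs2 ⟨hu0, hu1⟩
      have hd1e : 1 + (-(t*x)/(1+t*x))*u = (1 + t*((1-u)*x))/(1+t*x) := by
        field_simp; ring
      have hd2e : 1 + (t*(1-x)/(1+t*x))*u = (1 + t*((1-u)*x+u))/(1+t*x) := by
        field_simp; ring
      simp only [betaDensity]
      rw [show (1:ℝ)-α-1 = -α by ring, show (1:ℝ)+α-1 = α by ring, hd1e, hd2e]
      field_simp
      ring
    rw [setIntegral_congr_fun measurableSet_Ioo hpt,
        integral_add ((intK hα hα1 hs1).const_mul _) ((intK hα hα1 hs2).const_mul _),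
        integral_const_mul, integral_const_mul]
    by_cases hx0' : x = 0
    · subst hx0'
      norm_num
    by_cases hx1' : x = 1
    · subst hx1'
      norm_num
    have hx0'' : 0 < x := hx0.lt_of_ne (Ne.symm hx0')
    have hx1'' : x < 1 := lt_of_le_of_ne hx1 hx1'
    have hs1ne : -(t*x)/(1+t*x) ≠ 0 := by
      apply div_ne_zero _ ha.ne'
      simp only [neg_ne_zero]
      positivity
    have hs2ne : t*(1-x)/(1+t*x) ≠ 0 := by
      apply div_ne_zero _ ha.ne'
      have : 0 < 1 - x := by linarith
      positivity
    rw [K_val hα hα1 hs1 hs1ne, K_val hα hα1 hs2 hs2ne, e1, e2,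
        Real.inv_rpow ha.le, Real.div_rpow ht1.le ha.le, hG2, hG1a,
        Real.rpow_add ha 2 α, show ((2:ℝ)) = ((2:ℕ):ℝ) by norm_num, Real.rpow_natCast,
        div_div_eq_mul_div, div_div_eq_mul_div]
    have h1x : 0 < 1 - x := by linarith
    have htx : t*x ≠ 0 := by positivity
    field_simp
    ring
  have h2 : (∫ u in Set.Ioo (0:ℝ) 1, betaDensity (1 - α) α u / ((α + 1) * u)
        * (c₁ * (1 + t * ((1 - u) * x + u))⁻¹ + c₂ * (1 + t * ((1 - u) * x))⁻¹
          - (c₁ + c₂) * (1 + t * x)⁻¹))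
      = -(t / (α + 1) * ((c₁ * (1 - x) * (1 + t) ^ (α - 1) - c₂ * x)
          / (1 + t * x) ^ (1 + α))) := by
    have hpt : Set.EqOn (fun u : ℝ => betaDensity (1 - α) α u / ((α + 1) * u)
          * (c₁ * (1 + t * ((1 - u) * x + u))⁻¹ + c₂ * (1 + t * ((1 - u) * x))⁻¹
            - (c₁ + c₂) * (1 + t * x)⁻¹))
        (fun u : ℝ => (Real.Gamma (1-α+α) / (Real.Gamma (1-α) * Real.Gamma α)
              * (c₂*t*x/((α+1)*(1+t*x)^2)))
            * (u ^ (-α) * (1-u) ^ (α-1) / (1 + (-(t*x)/(1+t*x))*u))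
          + (-(Real.Gamma (1-α+α) / (Real.Gamma (1-α) * Real.Gamma α)
              * (c₁*t*(1-x)/((α+1)*(1+t*x)^2))))
            * (u ^ (-α) * (1-u) ^ (α-1) / (1 + (t*(1-x)/(1+t*x))*u))) (Set.Ioo (0:ℝ) 1) := by
      intro u hu
      obtain ⟨hu0, hu1⟩ := hu
      have hA : 0 < 1 + t * ((1-u)*x + u) := by nlinarith
      have hB : 0 < 1 + t * ((1-u)*x) := by nlinarith
      have hd1 : 0 < 1 + (-(t*x)/(1+t*x))*u := one_add_mul_pos hs1 ⟨hu0, hu1⟩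
      have hd2 : 0 < 1 + (t*(1-x)/(1+t*x))*u := one_add_mul_pos hs2 ⟨hu0, hu1⟩
      have hap1 : (0:ℝ) < α + 1 := by linarith
      have hd1e : 1 + (-(t*x)/(1+t*x))*u = (1 + t*((1-u)*x))/(1+t*x) := by
        field_simp; ring
      have hd2e : 1 + (t*(1-x)/(1+t*x))*u = (1 + t*((1-u)*x+u))/(1+t*x) := by
        field_simp; ring
      simp only [betaDensity]
      rw [show (1:ℝ)-α-1 = -α by ring, hd1e, hd2e]
      field_simp
      ring
    rw [setIntegral_congr_fun measurableSet_Ioo hpt,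
        integral_add ((intJ hα hα1 hs1).const_mul _) ((intJ hα hα1 hs2).const_mul _),
        integral_const_mul, integral_const_mul,
        J_val hα hα1 hs1, J_val hα hα1 hs2, e1, e2,
        Real.inv_rpow ha.le, Real.div_rpow ht1.le ha.le, hG1,
        Real.rpow_sub ha α 1, Real.rpow_sub ht1 α 1, Real.rpow_one, Real.rpow_one,
        Real.rpow_add ha 1 α, Real.rpow_one]
    have hap1 : (0:ℝ) < α + 1 := by linarith
    have hTp1 : 0 < (1+t) ^ (α-1) := Real.rpow_pos_of_pos ht1 (α-1)
    field_simp
    ring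
  unfold genA
  simp only []
  rw [integral_Icc_eq_integral_Ioc, integral_Ioc_eq_integral_Ioo,
      integral_Icc_eq_integral_Ioc, integral_Ioc_eq_integral_Ioo, h1, h2]
  ring
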